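/- Let Q → N be a surjective homomorphism of abelian groups with kernel K, and let P be a simplicial abelian group with P₀ = Q, each Pₙ of the form Q ⊕ ℤ^{Yₙ}, together with a surjective quasi-isomorphism P → N (constant). Set T = ker((P/K)^{collapse} → N), i.e., T is the simplicial abelian group kernel of P/K → N where K = ker(Q → N) is included in each Pₙ via Q. Then Hₙ(T) = 0 for n ≥ 2 and n = 0, and H₁(T) ≅ ker(Q → N). -/

import Mathlib

open CategoryTheory AlgebraicTopology Limits

noncomputable instance : Abelian (SimplicialObject (ModuleCat ℤ)) := by
  dsimp [SimplicialObject]; infer_instance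

instance : (alternatingFaceMapComplex (ModuleCat ℤ)).Additive := ⟨by intros; ext n; rfl⟩

/-- The homology of a simplicial abelian group (via its alternating face map complex). -/
noncomputable abbrev simpHomology (T : SimplicialObject (ModuleCat ℤ)) (n : ℕ) :
    ModuleCat ℤ :=
  ((alternatingFaceMapComplex (ModuleCat ℤ)).obj T).homology n

/-- The alternating face map complex of a constant simplicial abelian group. -/
noncomputable abbrev constCx (A : ModuleCat ℤ) : ChainComplex (ModuleCat ℤ) ℕ :=
  (alternatingFaceMapComplex (ModuleCat ℤ)).obj ((Functor.const SimplexCategoryᵒᵖ).obj A)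

lemma constCx_d (A : ModuleCat ℤ) (n : ℕ) :
    (constCx A).d (n+1) n = (if Even n then 0 else 𝟙 A) := by
  rw [alternatingFaceMapComplex_obj_d]
  dsimp [AlternatingFaceMapComplex.objD, SimplicialObject.δ]
  rw [← Finset.sum_smul, Fin.sum_univ_eq_sum_range (fun i => ((-1 : ℤ) ^ i)), neg_one_geom_sum]
  by_cases h : Even n
  · rw [if_pos (by simp [Nat.even_add, h]), if_pos h]; simp
  · rw [if_neg (by simp [Nat.even_add, h]), if_neg h]; simp

lemma constCx_exactAt (A : ModuleCat ℤ) (n : ℕ) : (constCx A).ExactAt (n+1) := by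
  rw [HomologicalComplex.exactAt_iff' _ (n+2) (n+1) n (by simp) (by simp)]
  rw [ShortComplex.moduleCat_exact_iff]
  intro x₂ hx₂
  dsimp [HomologicalComplex.sc', HomologicalComplex.shortComplexFunctor'] at x₂ hx₂ ⊢
  by_cases h : Even n
  · rw [show n+2 = (n+1)+1 from rfl, constCx_d, if_neg (by simp [Nat.even_add_one, h])]
    exact ⟨x₂, rfl⟩
  · rw [constCx_d, if_neg h] at hx₂
    exact ⟨0, by simp at hx₂; subst hx₂; exact map_zero _⟩

lemma constCx_isZero_homology (A : ModuleCat ℤ) (n : ℕ) :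
    IsZero ((constCx A).homology (n+1)) :=
  (HomologicalComplex.exactAt_iff_isZero_homology _ _).1 (constCx_exactAt A n)

noncomputable def constCxHomology0 (A : ModuleCat ℤ) : (constCx A).homology 0 ≅ A :=
  (constCx A).isoHomologyι₀ ≪≫
    ((constCx A).pOpcyclesIso 1 0 (by simp) (by rw [constCx_d]; simp)).symm

/-- let `g : Q → N` be a surjective homomorphism of abelian groups with
kernel `K`, and `P` a simplicial abelian group with each `Pₙ ≅ Q ⊕ ℤ^{Yₙ}` (via a natural
inclusion `ι : Q → Pₙ`), equipped with a surjective quasi-isomorphism `ε : P → N`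
(constant) extending `g`.  Let `T` be the kernel of the induced map `P/K → N`, where `K`
is included in each `Pₙ` via `Q`.  Then `Hₙ(T) = 0` for `n = 0` and `n ≥ 2`, and
`H₁(T) ≅ K = ker(Q → N)`. -/
theorem stmt9 (Q N : Type) [AddCommGroup Q] [AddCommGroup N]
    (g : Q →ₗ[ℤ] N) (hg : Function.Surjective g)
    (P : SimplicialObject (ModuleCat ℤ))
    (ι : (Functor.const SimplexCategoryᵒᵖ).obj (ModuleCat.of ℤ Q) ⟶ P)
    (hlevel : ∀ n : SimplexCategoryᵒᵖ, ∃ (Y : Type) (e : P.obj n ≃ₗ[ℤ] Q × (Y →₀ ℤ)),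
      ∀ q : Q, e (ι.app n q) = (q, 0))
    (ε : P ⟶ (Functor.const SimplexCategoryᵒᵖ).obj (ModuleCat.of ℤ N))
    (hεg : ∀ (n : SimplexCategoryᵒᵖ) (q : Q), ε.app n (ι.app n q) = g q)
    (hεsurj : ∀ n : SimplexCategoryᵒᵖ, Function.Surjective (ε.app n))
    (hquasi : QuasiIso ((alternatingFaceMapComplex (ModuleCat ℤ)).map ε))
    -- the (constant) inclusion of `K = ker g` into `P` via `Q`
    (ρ : (Functor.const SimplexCategoryᵒᵖ).obj (ModuleCat.of ℤ ↥(LinearMap.ker g)) ⟶ P)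
    (hρ : ∀ (n : SimplexCategoryᵒᵖ) (k : ↥(LinearMap.ker g)), ρ.app n k = ι.app n (k : Q))
    (hzero : ρ ≫ ε = 0) :
    Limits.IsZero (simpHomology (kernel (cokernel.desc ρ ε hzero)) 0) ∧
    (∀ n : ℕ, 2 ≤ n → Limits.IsZero (simpHomology (kernel (cokernel.desc ρ ε hzero)) n)) ∧
    Nonempty (simpHomology (kernel (cokernel.desc ρ ε hzero)) 1 ≅
      ModuleCat.of ℤ ↥(LinearMap.ker g)) := by
  set g' := cokernel.desc ρ ε hzero with hg'
  -- basic monos/epis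
  have hι_inj : ∀ n, Function.Injective (ι.app n) := by
    intro n q q' h
    obtain ⟨Y, e, he⟩ := hlevel n
    have h2 := congrArg e h
    rw [he, he] at h2
    exact (Prod.ext_iff.1 h2).1
  haveI : ∀ n, Mono (ρ.app n) := by
    intro n
    rw [ModuleCat.mono_iff_injective]
    intro k k' h
    apply Subtype.ext
    apply hι_inj n
    rw [← hρ, ← hρ, h]
  haveI hmono : Mono ρ := NatTrans.mono_of_mono_app ρ
  haveI : ∀ n, Epi (ε.app n) := fun n => (ModuleCat.epi_iff_surjective _).2 (hεsurj n)
  haveI hεepi : Epi ε := NatTrans.epi_of_epi_app ε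
  have hπdesc : cokernel.π ρ ≫ g' = ε := cokernel.π_desc ρ ε hzero
  haveI hg'epi : Epi g' := by
    have : Epi (cokernel.π ρ ≫ g') := by rw [hπdesc]; infer_instance
    exact epi_of_epi (cokernel.π ρ) g'
  -- the two short exact sequences of simplicial abelian groups
  let S1 : ShortComplex (SimplicialObject (ModuleCat ℤ)) :=
    ShortComplex.mk ρ (cokernel.π ρ) (cokernel.condition ρ)
  let S2 : ShortComplex (SimplicialObject (ModuleCat ℤ)) :=
    ShortComplex.mk (kernel.ι g') g' (kernel.condition g')
  have hS1 : S1.ShortExact :=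
    { mono_f := hmono
      epi_g := inferInstance
      exact := S1.exact_of_g_is_cokernel (cokernelIsCokernel ρ) }
  have hS2 : S2.ShortExact :=
    { mono_f := inferInstance
      epi_g := hg'epi
      exact := S2.exact_of_f_is_kernel (kernelIsKernel g') }
  haveI : ∀ (k : SimplexCategoryᵒᵖ),
      ((evaluation SimplexCategoryᵒᵖ (ModuleCat ℤ)).obj k).PreservesZeroMorphisms :=
    fun k => inferInstance
  haveI : ∀ (k : SimplexCategoryᵒᵖ),
      PreservesFiniteLimits ((evaluation SimplexCategoryᵒᵖ (ModuleCat ℤ)).obj k) :=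
    fun k => inferInstance
  haveI : ∀ (k : SimplexCategoryᵒᵖ),
      PreservesFiniteColimits ((evaluation SimplexCategoryᵒᵖ (ModuleCat ℤ)).obj k) :=
    fun k => inferInstance
  -- mapped to chain complexes
  have hS1' : (S1.map (alternatingFaceMapComplex (ModuleCat ℤ))).ShortExact := by
    rw [HomologicalComplex.shortExact_iff_degreewise_shortExact]
    intro i
    exact hS1.map_of_exact ((evaluation _ _).obj (Opposite.op (SimplexCategory.mk i)))
  have hS2' : (S2.map (alternatingFaceMapComplex (ModuleCat ℤ))).ShortExact := by
    rw [HomologicalComplex.shortExact_iff_degreewise_shortExact]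
    intro i
    exact hS2.map_of_exact ((evaluation _ _).obj (Opposite.op (SimplexCategory.mk i)))
  -- homology facts
  have hε_iso : ∀ n : ℕ, IsIso (HomologicalComplex.homologyMap ((alternatingFaceMapComplex (ModuleCat ℤ)).map ε) n) := by
    intro n
    have := hquasi.quasiIsoAt n
    rwa [quasiIsoAt_iff_isIso_homologyMap] at this
  have hN_zero : ∀ n : ℕ, IsZero (((alternatingFaceMapComplex (ModuleCat ℤ)).obj ((Functor.const SimplexCategoryᵒᵖ).obj
      (ModuleCat.of ℤ N))).homology (n+1)) := fun n => constCx_isZero_homology _ n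
  have hK_zero : ∀ n : ℕ, IsZero (((alternatingFaceMapComplex (ModuleCat ℤ)).obj ((Functor.const SimplexCategoryᵒᵖ).obj
      (ModuleCat.of ℤ ↥(LinearMap.ker g)))).homology (n+1)) :=
    fun n => constCx_isZero_homology _ n
  have hP_zero : ∀ n : ℕ, IsZero (((alternatingFaceMapComplex (ModuleCat ℤ)).obj P).homology (n+1)) := by
    intro n
    haveI := hε_iso (n+1)
    exact (hN_zero n).of_iso (asIso (HomologicalComplex.homologyMap ((alternatingFaceMapComplex (ModuleCat ℤ)).map ε) (n+1)))
  have hρ0 : HomologicalComplex.homologyMap ((alternatingFaceMapComplex (ModuleCat ℤ)).map ρ) 0 = 0 := by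
    haveI := hε_iso 0
    have : HomologicalComplex.homologyMap ((alternatingFaceMapComplex (ModuleCat ℤ)).map ρ) 0 ≫
        HomologicalComplex.homologyMap ((alternatingFaceMapComplex (ModuleCat ℤ)).map ε) 0 = 0 := by
      rw [← HomologicalComplex.homologyMap_comp, ← (alternatingFaceMapComplex (ModuleCat ℤ)).map_comp, hzero, (alternatingFaceMapComplex (ModuleCat ℤ)).map_zero,
        HomologicalComplex.homologyMap_zero]
    exact zero_of_comp_mono _ this
  have hrel : ∀ n : ℕ, (ComplexShape.down ℕ).Rel (n+1) n := fun n => rfl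
  -- homology of C := cokernel ρ
  have hC_zero : ∀ n : ℕ, 2 ≤ n → IsZero (((alternatingFaceMapComplex (ModuleCat ℤ)).obj (cokernel ρ)).homology n) := by
    intro n hn
    obtain ⟨m, rfl⟩ : ∃ m, n = m + 2 := ⟨n - 2, by omega⟩
    exact (hS1'.homology_exact₃ (m+2) (m+1) (hrel (m+1))).isZero_X₂
      ((hP_zero (m+1)).eq_zero_of_src _) ((hK_zero m).eq_zero_of_tgt _)
  have hδ10 : IsIso (hS1'.δ 1 0 (hrel 0)) := by
    have hmonoδ : Mono (hS1'.δ 1 0 (hrel 0)) :=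
      (hS1'.homology_exact₃ 1 0 (hrel 0)).mono_g ((hP_zero 0).eq_zero_of_src _)
    have hepiδ : Epi (hS1'.δ 1 0 (hrel 0)) :=
      (hS1'.homology_exact₁ 1 0 (hrel 0)).epi_f hρ0
    exact isIso_of_mono_of_epi _
  have eH1C : (((alternatingFaceMapComplex (ModuleCat ℤ)).obj (cokernel ρ)).homology 1) ≅ ModuleCat.of ℤ ↥(LinearMap.ker g) :=
    @asIso _ _ _ _ (hS1'.δ 1 0 (hrel 0)) hδ10 ≪≫ constCxHomology0 (ModuleCat.of ℤ ↥(LinearMap.ker g))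
  -- H₀(P) → H₀(C) is iso
  haveI hπ0_epi : Epi (HomologicalComplex.homologyMap ((alternatingFaceMapComplex (ModuleCat ℤ)).map (cokernel.π ρ)) 0) := by
    haveI : Epi (((alternatingFaceMapComplex (ModuleCat ℤ)).map (cokernel.π ρ)).f 0) :=
      inferInstanceAs (Epi ((cokernel.π ρ).app (Opposite.op (SimplexCategory.mk 0))))
    exact HomologicalComplex.epi_homologyMap_of_epi_of_not_rel _ 0
      (by intro j h; exact Nat.succ_ne_zero j h)
  haveI hπ0_mono : Mono (HomologicalComplex.homologyMap ((alternatingFaceMapComplex (ModuleCat ℤ)).map (cokernel.π ρ)) 0) :=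
    (hS1'.homology_exact₂ 0).mono_g hρ0
  haveI hπ0_iso : IsIso (HomologicalComplex.homologyMap ((alternatingFaceMapComplex (ModuleCat ℤ)).map (cokernel.π ρ)) 0) :=
    isIso_of_mono_of_epi _
  -- H₀(C) → H₀(N) is iso
  have hcomp : HomologicalComplex.homologyMap ((alternatingFaceMapComplex (ModuleCat ℤ)).map (cokernel.π ρ)) 0 ≫
      HomologicalComplex.homologyMap ((alternatingFaceMapComplex (ModuleCat ℤ)).map g') 0 =
      HomologicalComplex.homologyMap ((alternatingFaceMapComplex (ModuleCat ℤ)).map ε) 0 := by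
    rw [← HomologicalComplex.homologyMap_comp, ← (alternatingFaceMapComplex (ModuleCat ℤ)).map_comp, hπdesc]
  haveI hg'0_iso : IsIso (HomologicalComplex.homologyMap ((alternatingFaceMapComplex (ModuleCat ℤ)).map g') 0) := by
    haveI := hε_iso 0
    haveI : IsIso (HomologicalComplex.homologyMap ((alternatingFaceMapComplex (ModuleCat ℤ)).map (cokernel.π ρ)) 0 ≫
        HomologicalComplex.homologyMap ((alternatingFaceMapComplex (ModuleCat ℤ)).map g') 0) := by
      rw [hcomp]; infer_instance
    exact IsIso.of_isIso_comp_left (HomologicalComplex.homologyMap ((alternatingFaceMapComplex (ModuleCat ℤ)).map (cokernel.π ρ)) 0) _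
  -- now the three goals
  refine ⟨?_, ?_, ?_⟩
  · -- H₀(T) = 0
    have hmonoT : Mono (HomologicalComplex.homologyMap ((alternatingFaceMapComplex (ModuleCat ℤ)).map (kernel.ι g')) 0) :=
      (hS2'.homology_exact₁ 1 0 (hrel 0)).mono_g ((hN_zero 0).eq_zero_of_src _)
    have hgmono : Mono (HomologicalComplex.homologyMap
        ((alternatingFaceMapComplex (ModuleCat ℤ)).map g') 0) := inferInstance
    have hfzero : HomologicalComplex.homologyMap
        ((alternatingFaceMapComplex (ModuleCat ℤ)).map (kernel.ι g')) 0 = 0 :=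
      (hS2'.homology_exact₂ 0).mono_g_iff.1 hgmono
    rw [IsZero.iff_id_eq_zero]
    haveI := hmonoT
    rw [← cancel_mono (HomologicalComplex.homologyMap ((alternatingFaceMapComplex (ModuleCat ℤ)).map (kernel.ι g')) 0)]
    simp [hfzero]
  · -- Hₙ(T) = 0 for n ≥ 2
    intro n hn
    refine (hS2'.homology_exact₁ (n+1) n (hrel n)).isZero_X₂
      ((hN_zero n).eq_zero_of_src _) ((hC_zero n hn).eq_zero_of_tgt _)
  · -- H₁(T) ≅ ker g
    have hmono1 : Mono (HomologicalComplex.homologyMap ((alternatingFaceMapComplex (ModuleCat ℤ)).map (kernel.ι g')) 1) :=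
      (hS2'.homology_exact₁ 2 1 (hrel 1)).mono_g ((hN_zero 1).eq_zero_of_src _)
    have hepi1 : Epi (HomologicalComplex.homologyMap ((alternatingFaceMapComplex (ModuleCat ℤ)).map (kernel.ι g')) 1) :=
      (hS2'.homology_exact₂ 1).epi_f ((hN_zero 0).eq_zero_of_tgt _)
    haveI := hmono1; haveI := hepi1
    haveI : IsIso (HomologicalComplex.homologyMap ((alternatingFaceMapComplex (ModuleCat ℤ)).map (kernel.ι g')) 1) :=
      isIso_of_mono_of_epi _
    exact ⟨asIso (HomologicalComplex.homologyMap ((alternatingFaceMapComplex (ModuleCat ℤ)).map (kernel.ι g')) 1) ≪≫ eH1C⟩
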